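/- Let d, n, m be positive natural numbers, let ε ∈ (0, 1), and let v : Fin (n + m) → EuclideanSpace ℝ (Fin d) be an injective family of unit vectors (‖v i‖ = 1 for all i), where the first n vectors are the real samples and the last m vectors are the fake samples. Define weights w : Fin (n + m) → ℝ by w i = 1 if i < n and w i = 0 if i ≥ n, and for k > 0 define the one-hidden-layer softmax network D_k(u) = (∑ i, w i * Real.exp (k * ⟪v i, u⟫)) / (∑ i, Real.exp (k * ⟪v i, u⟫)) where ⟪·,·⟫ is the real inner product. Then there exists k > 0 such that D_k(v j) ≥ 1/2 + ε/2 for every j < n and D_k(v j) ≤ 1/2 − ε/2 for every j ≥ n; i.e., D_k is an ε-optimal discriminator for the two datasets. -/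

import Mathlib

open RealInnerProductSpace

/-- Proposition 2: for two disjoint datasets of unit-norm samples (the first `n` real,
the last `m` fake) and `ε ∈ (0,1)`, there is a one-hidden-layer softmax network
`D_k` that is an ε-optimal discriminator. -/
theorem exists_eps_optimal_softmax_discriminator
    (d n m : ℕ) (hd : 0 < d) (hn : 0 < n) (hm : 0 < m)
    (ε : ℝ) (hε : ε ∈ Set.Ioo (0 : ℝ) 1)
    (v : Fin (n + m) → EuclideanSpace ℝ (Fin d))
    (hinj : Function.Injective v)
    (hnorm : ∀ i, ‖v i‖ = 1) :
    ∃ k : ℝ, 0 < k ∧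
      ∀ j : Fin (n + m),
        (((j : ℕ) < n →
          (∑ i : Fin (n + m), (if (i : ℕ) < n then (1 : ℝ) else 0) * Real.exp (k * ⟪v i, v j⟫)) /
            (∑ i : Fin (n + m), Real.exp (k * ⟪v i, v j⟫)) ≥ 1 / 2 + ε / 2) ∧
        ((j : ℕ) ≥ n →
          (∑ i : Fin (n + m), (if (i : ℕ) < n then (1 : ℝ) else 0) * Real.exp (k * ⟪v i, v j⟫)) /
            (∑ i : Fin (n + m), Real.exp (k * ⟪v i, v j⟫)) ≤ 1 / 2 - ε / 2)) := by
  obtain ⟨hε0, hε1⟩ := hε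
  have hself : ∀ j : Fin (n + m), ⟪v j, v j⟫ = 1 := by
    intro j
    rw [real_inner_self_eq_norm_sq, hnorm]; norm_num
  have hlt : ∀ i j : Fin (n + m), i ≠ j → ⟪v i, v j⟫ < 1 := by
    intro i j hij
    exact (inner_lt_one_iff_real_of_norm_eq_one (hnorm i) (hnorm j)).2
      (fun h => hij (hinj h))
  -- the maximal off-diagonal inner product
  set P : Finset (Fin (n + m) × Fin (n + m)) :=
    Finset.univ.filter (fun p => p.1 ≠ p.2) with hP
  have hNge : 2 ≤ n + m := by omega
  have hPne : P.Nonempty := by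
    refine ⟨(⟨0, by omega⟩, ⟨1, by omega⟩), ?_⟩
    simp [hP, Fin.ext_iff]
  set c : ℝ := P.sup' hPne (fun p => ⟪v p.1, v p.2⟫) with hc
  have hc1 : c < 1 := by
    rw [hc, Finset.sup'_lt_iff]
    intro p hp
    exact hlt p.1 p.2 (by simpa [hP] using hp)
  have hcb : ∀ i j : Fin (n + m), i ≠ j → ⟪v i, v j⟫ ≤ c := by
    intro i j hij
    exact Finset.le_sup' (f := fun p : Fin (n+m) × Fin (n+m) => ⟪v p.1, v p.2⟫)
      (by simp [hP, hij] : (i, j) ∈ P)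
  set N : ℝ := ((n + m : ℕ) : ℝ) with hNdef
  have hNpos : (0 : ℝ) < N := by positivity
  have hratio : (0 : ℝ) < (1 - ε) / (2 * N) := by
    apply div_pos <;> [linarith; positivity]
  set k : ℝ := max 1 (Real.log (2 * N / (1 - ε)) / (1 - c)) with hk
  have hk1 : (1 : ℝ) ≤ k := le_max_left _ _
  have hk0 : (0 : ℝ) < k := by linarith
  refine ⟨k, hk0, ?_⟩
  -- key bound on off-diagonal terms
  have hkey : ∀ i j : Fin (n + m), i ≠ j →
      Real.exp (k * ⟪v i, v j⟫) ≤ Real.exp k * ((1 - ε) / (2 * N)) := by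
    intro i j hij
    have h1 : Real.exp (k * ⟪v i, v j⟫) ≤ Real.exp (k * c) := by
      apply Real.exp_le_exp.2
      exact mul_le_mul_of_nonneg_left (hcb i j hij) (le_of_lt hk0)
    have h2 : Real.exp (k * c) = Real.exp k * Real.exp (k * (c - 1)) := by
      rw [← Real.exp_add]; ring_nf
    have h3 : Real.exp (k * (c - 1)) ≤ (1 - ε) / (2 * N) := by
      rw [← Real.exp_log hratio]
      apply Real.exp_le_exp.2
      have hd1 : Real.log (2 * N / (1 - ε)) / (1 - c) ≤ k := le_max_right _ _
      have hcpos : (0 : ℝ) < 1 - c := by linarith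
      have := (div_le_iff₀ hcpos).1 hd1
      have hlogeq : Real.log ((1 - ε) / (2 * N)) = - Real.log (2 * N / (1 - ε)) := by
        rw [← Real.log_inv]
        congr 1
        field_simp
      nlinarith [this, hlogeq]
    calc Real.exp (k * ⟪v i, v j⟫) ≤ Real.exp (k * c) := h1
      _ = Real.exp k * Real.exp (k * (c - 1)) := h2
      _ ≤ Real.exp k * ((1 - ε) / (2 * N)) := by
          exact mul_le_mul_of_nonneg_left h3 (le_of_lt (Real.exp_pos k))
  intro j
  set S : ℝ := ∑ i : Fin (n + m), (if (i : ℕ) < n then (1 : ℝ) else 0) *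
      Real.exp (k * ⟪v i, v j⟫) with hS
  set T : ℝ := ∑ i : Fin (n + m), Real.exp (k * ⟪v i, v j⟫) with hT
  have hek : (0 : ℝ) < Real.exp k := Real.exp_pos k
  have hT0 : (0 : ℝ) < T := Finset.sum_pos (fun i _ => Real.exp_pos _) ⟨j, Finset.mem_univ j⟩
  have hTj : T = Real.exp k + ∑ i ∈ Finset.univ.erase j, Real.exp (k * ⟪v i, v j⟫) := by
    rw [hT, ← Finset.add_sum_erase _ _ (Finset.mem_univ j), hself j, mul_one]
  have herase : ∑ i ∈ Finset.univ.erase j, Real.exp (k * ⟪v i, v j⟫) ≤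
      Real.exp k * ((1 - ε) / 2) := by
    calc ∑ i ∈ Finset.univ.erase j, Real.exp (k * ⟪v i, v j⟫)
        ≤ (Finset.univ.erase j).card • (Real.exp k * ((1 - ε) / (2 * N))) := by
          apply Finset.sum_le_card_nsmul
          intro i hi
          exact hkey i j (Finset.ne_of_mem_erase hi)
      _ ≤ N * (Real.exp k * ((1 - ε) / (2 * N))) := by
          rw [nsmul_eq_mul]
          apply mul_le_mul_of_nonneg_right _ (by positivity)
          rw [hNdef]
          have hcard : (Finset.univ.erase j).card ≤ n + m := by
            calc (Finset.univ.erase j).card ≤ (Finset.univ : Finset (Fin (n+m))).card :=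
                  Finset.card_le_card (Finset.erase_subset _ _)
              _ = n + m := by simp
          exact_mod_cast Nat.cast_le.2 hcard
      _ = Real.exp k * ((1 - ε) / 2) := by field_simp
  constructor
  · -- real sample
    intro hjn
    have hSge : Real.exp k ≤ S := by
      have := Finset.single_le_sum (f := fun i : Fin (n + m) =>
        (if (i : ℕ) < n then (1 : ℝ) else 0) * Real.exp (k * ⟪v i, v j⟫))
        (fun i _ => by positivity) (Finset.mem_univ j)
      simpa only [if_pos hjn, one_mul, hself j, mul_one] using this
    have hTle : T ≤ Real.exp k * ((3 - ε) / 2) := by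
      rw [hTj]; nlinarith [herase]
    rw [ge_iff_le, le_div_iff₀ hT0]
    nlinarith [sq_nonneg (1 - ε), mul_le_mul_of_nonneg_left hTle (by linarith : (0:ℝ) ≤ 1/2 + ε/2)]
  · -- fake sample
    intro hjn
    have hSle : S ≤ Real.exp k * ((1 - ε) / 2) := by
      calc S ≤ (Finset.univ : Finset (Fin (n + m))).card •
            (Real.exp k * ((1 - ε) / (2 * N))) := by
            apply Finset.sum_le_card_nsmul
            intro i _
            by_cases hi : (i : ℕ) < n
            · have hij : i ≠ j := by
                intro h; rw [h] at hi; omega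
              simpa [hi] using hkey i j hij
            · simp [hi]; positivity
        _ = N * (Real.exp k * ((1 - ε) / (2 * N))) := by
            rw [nsmul_eq_mul]; congr 1; simp [hNdef]
        _ = Real.exp k * ((1 - ε) / 2) := by field_simp
    have hTge : Real.exp k ≤ T := by
      have := Finset.single_le_sum (f := fun i : Fin (n + m) =>
        Real.exp (k * ⟪v i, v j⟫)) (fun i _ => (Real.exp_pos _).le) (Finset.mem_univ j)
      simpa only [hself j, mul_one] using this
    rw [div_le_iff₀ hT0]
    nlinarith [mul_le_mul_of_nonneg_left hTge (by linarith : (0:ℝ) ≤ 1/2 - ε/2)]
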